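/- Let a, b ∈ ℂ with a ≠ b, and let Q = {a + t·(b − a) + u·i·(b − a) : t, u ∈ [0, 1]} be the square one of whose sides is the segment from a to b (here i is the imaginary unit). Then for every point p ∈ Q with p ≠ a and p ≠ b, the Euclidean angle ∠ a p b (the angle at vertex p between the segments from p to a and from p to b) is at least π/4. -/

import Mathlib

open RealInnerProductSpace

lemma key_ineq (t u : ℝ) (ht0 : 0 ≤ t) (ht1 : t ≤ 1) (hu0 : 0 ≤ u) (hu1 : u ≤ 1) :
    t^2 - t + u^2 ≤ Real.sqrt 2 / 2 *
      (Real.sqrt (t^2 + u^2) * Real.sqrt ((1-t)^2 + u^2)) := by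
  rcases le_or_gt (t^2 - t + u^2) 0 with h | h
  · exact h.trans (by positivity)
  · refine le_of_pow_le_pow_left₀ (two_ne_zero) (by positivity) ?_
    have e1 : Real.sqrt (t^2+u^2) ^ 2 = t^2 + u^2 := Real.sq_sqrt (by positivity)
    have e2 : Real.sqrt ((1-t)^2+u^2) ^ 2 = (1-t)^2 + u^2 := Real.sq_sqrt (by positivity)
    have e3 : Real.sqrt 2 ^ 2 = 2 := Real.sq_sqrt (by norm_num)
    rw [mul_pow, mul_pow, div_pow, e1, e2, e3]
    have h1 : 0 ≤ (t^2 - t + u^2) * (1 - u^2) :=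
      mul_nonneg h.le (by nlinarith [mul_self_nonneg u, mul_nonneg hu0 hu0])
    have h2 : 0 ≤ t * (1-t) * (t^2+u^2) :=
      mul_nonneg (mul_nonneg ht0 (by linarith)) (by positivity)
    have h3 : 0 ≤ t * (1-t)^2 := mul_nonneg ht0 (sq_nonneg _)
    nlinarith [h1, h2, h3]

/-- Observation 5 (obs:0): any point `p` of the square with side the segment from
`a` to `b` (in the Euclidean plane ℂ), other than `a` and `b` themselves, sees
that side under an angle of at least `π/4`. -/
theorem stmt_11 (a b : ℂ) (hab : a ≠ b) (p : ℂ)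
    (hp : ∃ t u : ℝ, t ∈ Set.Icc (0 : ℝ) 1 ∧ u ∈ Set.Icc (0 : ℝ) 1 ∧
      p = a + t • (b - a) + u • (Complex.I * (b - a)))
    (hpa : p ≠ a) (hpb : p ≠ b) :
    Real.pi / 4 ≤ EuclideanGeometry.angle a p b := by
  obtain ⟨t, u, ⟨ht0, ht1⟩, ⟨hu0, hu1⟩, hpeq⟩ := hp
  set x : ℝ := (b - a).re with hx
  set y : ℝ := (b - a).im with hy
  have hre1 : (a - p).re = u*y - t*x := by
    rw [hpeq]; simp [Complex.real_smul, Complex.mul_re, hx, hy]; ring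
  have him1 : (a - p).im = -(t*y + u*x) := by
    rw [hpeq]; simp [Complex.real_smul, Complex.mul_im, hx, hy]; ring
  have hre2 : (b - p).re = x - t*x + u*y := by
    rw [hpeq]; simp [Complex.real_smul, Complex.mul_re, hx, hy]; ring
  have him2 : (b - p).im = y - t*y - u*x := by
    rw [hpeq]; simp [Complex.real_smul, Complex.mul_im, hx, hy]; ring
  have hNa : 0 < ‖a - p‖ := norm_pos_iff.mpr (sub_ne_zero.mpr hpa.symm)
  have hNb : 0 < ‖b - p‖ := norm_pos_iff.mpr (sub_ne_zero.mpr hpb.symm)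
  have hN : 0 < ‖a - p‖ * ‖b - p‖ := mul_pos hNa hNb
  have hD : (0:ℝ) ≤ x^2 + y^2 := by positivity
  have hsD : Real.sqrt (x^2+y^2) ^ 2 = x^2 + y^2 := Real.sq_sqrt hD
  have hinner : ⟪a - p, b - p⟫ = (t^2 - t + u^2) * (x^2 + y^2) := by
    rw [Complex.inner, Complex.mul_re, Complex.conj_re, Complex.conj_im,
      hre1, him1, hre2, him2]
    ring
  have hn1 : ‖a - p‖ = Real.sqrt (t^2+u^2) * Real.sqrt (x^2+y^2) := by
    rw [Complex.norm_def, Complex.normSq_apply, hre1, him1,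
      ← Real.sqrt_mul (by positivity)]
    congr 1; ring
  have hn2 : ‖b - p‖ = Real.sqrt ((1-t)^2+u^2) * Real.sqrt (x^2+y^2) := by
    rw [Complex.norm_def, Complex.normSq_apply, hre2, him2,
      ← Real.sqrt_mul (by positivity)]
    congr 1; ring
  have hQ : ⟪a - p, b - p⟫ ≤ Real.sqrt 2 / 2 * (‖a - p‖ * ‖b - p‖) := by
    rw [hinner, hn1, hn2]
    calc (t^2 - t + u^2) * (x^2 + y^2)
        ≤ (Real.sqrt 2 / 2 * (Real.sqrt (t^2+u^2) * Real.sqrt ((1-t)^2+u^2))) * (x^2+y^2) :=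
          mul_le_mul_of_nonneg_right (key_ineq t u ht0 ht1 hu0 hu1) hD
      _ = Real.sqrt 2 / 2 * (Real.sqrt (t^2+u^2) * Real.sqrt (x^2+y^2) *
            (Real.sqrt ((1-t)^2+u^2) * Real.sqrt (x^2+y^2))) := by ring_nf; rw [hsD]; ring_nf
  by_contra hlt
  push_neg at hlt
  have hcos : Real.cos (EuclideanGeometry.angle a p b) =
      ⟪a - p, b - p⟫ / (‖a - p‖ * ‖b - p‖) := by
    rw [EuclideanGeometry.angle, show a -ᵥ p = a - p from rfl,
      show b -ᵥ p = b - p from rfl, InnerProductGeometry.cos_angle]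
  have h1 : Real.sqrt 2 / 2 < Real.cos (EuclideanGeometry.angle a p b) := by
    rw [← Real.cos_pi_div_four]
    exact Real.cos_lt_cos_of_nonneg_of_le_pi (EuclideanGeometry.angle_nonneg a p b)
      (by linarith [Real.pi_gt_three]) hlt
  rw [hcos, lt_div_iff₀ hN] at h1
  linarith
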